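/- arXiv:0706.3218 — 3 statements merged into one kernel-verified Lean document; each statement's English description precedes it below -/
import Mathlib

section
/- For every n ≥ 1 and every g ∈ F, the difference l_n(g) − l_∞(g) is a nonnegative even integer; that is, l_n(g) ≥ l_∞(g) and l_n(g) ≡ l_∞(g) (mod 2). -/
/-- The defining relations of Thompson's group `F` in the infinite presentation
`⟨x_k, k ≥ 0 | x_i⁻¹ x_j x_i = x_{j+1} for i < j⟩`. -/
def thompsonRels : Set (FreeGroup ℕ) :=
  {w | ∃ i j : ℕ, i < j ∧
    w = (FreeGroup.of i)⁻¹ * FreeGroup.of j * FreeGroup.of i * (FreeGroup.of (j + 1))⁻¹}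

/-- Thompson's group `F`. -/
abbrev ThompsonF := PresentedGroup thompsonRels

/-- The standard infinite family of generators `x_i` of Thompson's group `F`. -/
def x (i : ℕ) : ThompsonF := PresentedGroup.of i

/-- The word length of `g` with respect to a generating set `S`:
the least `m` such that `g` is a product of `m` elements of `S ∪ S⁻¹`. -/
noncomputable def wordLength {G : Type*} [Group G] (S : Set G) (g : G) : ℕ :=
  sInf {m | ∃ l : List G, l.length = m ∧ (∀ a ∈ l, a ∈ S ∨ a⁻¹ ∈ S) ∧ l.prod = g}

/-- The consecutive generating set `X_n = {x_0, x_1, …, x_n}`. -/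
def Xset (n : ℕ) : Set ThompsonF := {g | ∃ i ≤ n, g = x i}

/-- `l_n(g)`: word length of `g` with respect to `X_n`. -/
noncomputable def ln (n : ℕ) (g : ThompsonF) : ℕ := wordLength (Xset n) g

/-- `l_∞(g)`: word length of `g` with respect to the infinite generating set `{x_i | i ≥ 0}`. -/
noncomputable def linf (g : ThompsonF) : ℕ := wordLength (Set.range x) g

/-- The word metric `d_n(g,h) = l_n(g⁻¹ h)`. -/
noncomputable def dn (n : ℕ) (g h : ThompsonF) : ℕ := ln n (g⁻¹ * h)

/-- The defining relation in Thompson's group. -/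
lemma x_rel {i j : ℕ} (h : i < j) : (x i)⁻¹ * x j * x i = x (j + 1) := by
  have hmem : ((FreeGroup.of i)⁻¹ * FreeGroup.of j * FreeGroup.of i *
      (FreeGroup.of (j + 1))⁻¹ : FreeGroup ℕ) ∈ Subgroup.normalClosure thompsonRels :=
    Subgroup.subset_normalClosure ⟨i, j, h, rfl⟩
  have h1 : ((QuotientGroup.mk ((FreeGroup.of i)⁻¹ * FreeGroup.of j * FreeGroup.of i *
      (FreeGroup.of (j + 1))⁻¹) : ThompsonF)) = 1 :=
    (QuotientGroup.eq_one_iff _).2 hmem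
  have : (x i)⁻¹ * x j * x i * (x (j + 1))⁻¹ = 1 := by
    have h1' : PresentedGroup.mk thompsonRels ((FreeGroup.of i)⁻¹ * FreeGroup.of j *
        FreeGroup.of i * (FreeGroup.of (j + 1))⁻¹) = 1 := h1
    simpa [x, PresentedGroup.of, QuotientGroup.mk_mul, QuotientGroup.mk_inv] using h1'
  exact mul_inv_eq_one.mp this

lemma x_mem_closure_Xset (n : ℕ) (hn : 1 ≤ n) (j : ℕ) :
    x j ∈ Subgroup.closure (Xset n) := by
  induction j using Nat.strong_induction_on with
  | _ j ih =>
    rcases le_or_gt j n with hj | hj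
    · exact Subgroup.subset_closure ⟨j, hj, rfl⟩
    · obtain ⟨k, rfl⟩ : ∃ k, j = k + 1 := ⟨j - 1, by omega⟩
      have hk : 0 < k := by omega
      rw [← x_rel hk]
      have h0 := ih 0 (by omega)
      have hkc := ih k (by omega)
      exact mul_mem (mul_mem (inv_mem h0) hkc) h0

lemma closure_Xset (n : ℕ) (hn : 1 ≤ n) : Subgroup.closure (Xset n) = ⊤ := by
  rw [eq_top_iff, ← PresentedGroup.closure_range_of thompsonRels, Subgroup.closure_le]
  rintro _ ⟨i, rfl⟩
  exact x_mem_closure_Xset n hn i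

/-- Existence of a word over `S ∪ S⁻¹` for any element of the closure. -/
lemma exists_word {G : Type*} [Group G] {S : Set G} {g : G}
    (hg : g ∈ Subgroup.closure S) :
    ∃ l : List G, (∀ a ∈ l, a ∈ S ∨ a⁻¹ ∈ S) ∧ l.prod = g := by
  have : g ∈ Submonoid.closure (S ∪ S⁻¹) := by
    rw [← Subgroup.closure_toSubmonoid] at *
    exact hg
  obtain ⟨l, hl, hp⟩ := Submonoid.exists_list_of_mem_closure this
  refine ⟨l, fun a ha => ?_, hp⟩
  rcases hl a ha with h | h
  · exact Or.inl h
  · exact Or.inr h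

/-- The exponent-sum homomorphism `F → ℤ`. -/
noncomputable def expSum : ThompsonF →* Multiplicative ℤ :=
  PresentedGroup.toGroup (f := fun _ => Multiplicative.ofAdd (1 : ℤ)) (by
    rintro r ⟨i, j, hij, rfl⟩
    simp [FreeGroup.lift_apply_of])

lemma expSum_x (i : ℕ) : expSum (x i) = Multiplicative.ofAdd (1 : ℤ) :=
  PresentedGroup.toGroup.of _

lemma parity_of_word (l : List ThompsonF)
    (hl : ∀ a ∈ l, a ∈ Set.range x ∨ a⁻¹ ∈ Set.range x) :
    ((Multiplicative.toAdd (expSum l.prod) : ℤ) : ZMod 2) = (l.length : ZMod 2) := by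
  induction l with
  | nil => simp
  | cons a t ih =>
    have ht := ih (fun b hb => hl b (List.mem_cons_of_mem a hb))
    have ha : ((Multiplicative.toAdd (expSum a) : ℤ) : ZMod 2) = 1 := by
      rcases hl a List.mem_cons_self with ⟨i, hi⟩ | ⟨i, hi⟩
      · rw [← hi, expSum_x]; rfl
      · have ha' : a = (x i)⁻¹ := by rw [hi, inv_inv]
        rw [ha', map_inv, expSum_x]
        simp only [toAdd_inv, toAdd_ofAdd]
        decide
    simp only [List.prod_cons, map_mul, toAdd_mul, List.length_cons]
    push_cast
    rw [ha, ht]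
    ring

theorem ln_sub_linf_nonneg_even (n : ℕ) (hn : 1 ≤ n) (g : ThompsonF) :
    linf g ≤ ln n g ∧ ln n g % 2 = linf g % 2 := by
  -- the set for l_n is nonempty
  have hg : g ∈ Subgroup.closure (Xset n) := by
    rw [closure_Xset n hn]; trivial
  obtain ⟨l0, hl0, hp0⟩ := exists_word hg
  have hXsub : ∀ a : ThompsonF, (a ∈ Xset n ∨ a⁻¹ ∈ Xset n) →
      (a ∈ Set.range x ∨ a⁻¹ ∈ Set.range x) := by
    rintro a (⟨i, _, rfl⟩ | ⟨i, _, hi⟩)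
    · exact Or.inl ⟨i, rfl⟩
    · exact Or.inr ⟨i, hi.symm⟩
  have hne_n : {m | ∃ l : List ThompsonF, l.length = m ∧
      (∀ a ∈ l, a ∈ Xset n ∨ a⁻¹ ∈ Xset n) ∧ l.prod = g}.Nonempty :=
    ⟨l0.length, l0, rfl, hl0, hp0⟩
  have hne_inf : {m | ∃ l : List ThompsonF, l.length = m ∧
      (∀ a ∈ l, a ∈ Set.range x ∨ a⁻¹ ∈ Set.range x) ∧ l.prod = g}.Nonempty :=
    ⟨l0.length, l0, rfl, fun a ha => hXsub a (hl0 a ha), hp0⟩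
  -- minimal witnesses
  obtain ⟨ln', hln'⟩ := Nat.sInf_mem hne_n
  obtain ⟨li, hli⟩ := Nat.sInf_mem hne_inf
  have hle : linf g ≤ ln n g := by
    apply Nat.sInf_le
    exact ⟨ln', hln'.1, fun a ha => hXsub a (hln'.2.1 a ha), hln'.2.2⟩
  refine ⟨hle, ?_⟩
  have h1 : ((ln n g : ℕ) : ZMod 2) = ((Multiplicative.toAdd (expSum g) : ℤ) : ZMod 2) := by
    have hp := parity_of_word ln' (fun a ha => hXsub a (hln'.2.1 a ha))
    rw [hln'.2.2] at hp
    rw [show (ln n g) = ln'.length from hln'.1.symm]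
    exact hp.symm
  have h2 : ((linf g : ℕ) : ZMod 2) = ((Multiplicative.toAdd (expSum g) : ℤ) : ZMod 2) := by
    have hp := parity_of_word li hli.2.1
    rw [hli.2.2] at hp
    rw [show (linf g) = li.length from hli.1.symm]
    exact hp.symm
  have := h1.trans h2.symm
  rwa [ZMod.natCast_eq_natCast_iff'] at this
end

section
/- For every n ≥ 1, the word length of the generator x_{2n} of Thompson's group F with respect to the generating set X_n = {x_0, x_1, …, x_n} is exactly 2n + 1, i.e., l_n(x_{2n}) = 2n + 1. -/
namespace TAux

/-! ### A piecewise-linear model with a left-slope cocycle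

We let the generators act on `ℚ × ℤ`, where the first coordinate is a point of the line and
the second coordinate accumulates the logarithm (base 2) of the left slope along the orbit.
The generator `x_i` acts on the line by the PL map `gfun i` (identity on `(-∞, i]`,
slope `1/2` on `[i, i+2]`, translation by `-1` on `[i+2, ∞)`), whose inverse is `ffun i`. -/

def gfun (i : ℕ) (t : ℚ) : ℚ := if t ≤ i then t else if t ≤ (i:ℚ) + 2 then (t + i) / 2 else t - 1
def ffun (i : ℕ) (t : ℚ) : ℚ := if t ≤ i then t else if t ≤ (i:ℚ) + 1 then 2 * t - i else t + 1
def afun (i : ℕ) (t : ℚ) : ℤ := if (i:ℚ) < t then (if t ≤ (i:ℚ) + 2 then -1 else 0) else 0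
def bfun (i : ℕ) (t : ℚ) : ℤ := if (i:ℚ) < t then (if t ≤ (i:ℚ) + 1 then 1 else 0) else 0

lemma gfun_lo {i : ℕ} {t : ℚ} (h : t ≤ i) : gfun i t = t := by simp [gfun, h]
lemma gfun_mid {i : ℕ} {t : ℚ} (h1 : (i:ℚ) < t) (h2 : t ≤ (i:ℚ) + 2) : gfun i t = (t + i) / 2 := by
  simp only [gfun, if_neg (not_le.2 h1), if_pos h2]
lemma gfun_hi {i : ℕ} {t : ℚ} (h : (i:ℚ) + 2 < t) : gfun i t = t - 1 := by
  have : ¬ t ≤ (i:ℚ) := by push_neg; linarith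
  simp only [gfun, if_neg this, if_neg (not_le.2 h)]
lemma afun_lo {i : ℕ} {t : ℚ} (h : t ≤ i) : afun i t = 0 := by simp [afun, not_lt.2 h]
lemma afun_mid {i : ℕ} {t : ℚ} (h1 : (i:ℚ) < t) (h2 : t ≤ (i:ℚ) + 2) : afun i t = -1 := by
  simp [afun, h1, h2]
lemma afun_hi {i : ℕ} {t : ℚ} (h : (i:ℚ) + 2 < t) : afun i t = 0 := by
  simp [afun, not_le.2 h]

/-- The action of the generator `x_i` on `ℚ × ℤ`. -/
def psi (i : ℕ) : Equiv.Perm (ℚ × ℤ) where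
  toFun p := (gfun i p.1, p.2 + afun i p.1)
  invFun p := (ffun i p.1, p.2 + bfun i p.1)
  left_inv p := by
    obtain ⟨t, e⟩ := p
    simp only [gfun, ffun, afun, bfun, Prod.mk.injEq]
    split_ifs <;> constructor <;> first | linarith | omega | (exfalso; linarith)
  right_inv p := by
    obtain ⟨t, e⟩ := p
    simp only [gfun, ffun, afun, bfun, Prod.mk.injEq]
    split_ifs <;> constructor <;> first | linarith | omega | (exfalso; linarith)

lemma psi_apply (i : ℕ) (p : ℚ × ℤ) : psi i p = (gfun i p.1, p.2 + afun i p.1) := rfl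
lemma psi_inv_apply (i : ℕ) (p : ℚ × ℤ) : (psi i)⁻¹ p = (ffun i p.1, p.2 + bfun i p.1) := rfl

lemma comm_key {i j : ℕ} (hij : i < j) (t : ℚ) :
    gfun j (gfun i t) = gfun i (gfun (j+1) t) ∧
    afun i t + afun j (gfun i t) = afun (j+1) t + afun i (gfun (j+1) t) := by
  have h : (i:ℚ) + 1 ≤ j := by exact_mod_cast hij
  have hj1 : ((j+1 : ℕ) : ℚ) = (j:ℚ) + 1 := by push_cast; ring
  rcases le_or_gt t i with h1 | h1
  · -- t ≤ i
    have hA : gfun i t = t := gfun_lo h1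
    have hB : gfun (j+1) t = t := gfun_lo (by rw [hj1]; linarith)
    simp only [hA, hB, gfun_lo (show t ≤ (j:ℚ) by linarith),
      afun_lo h1, afun_lo (show t ≤ (j:ℚ) by linarith), afun_lo (show t ≤ ((j+1:ℕ):ℚ) by rw [hj1]; linarith)]
    constructor <;> first | trivial | omega | ring
  · rcases le_or_gt t ((i:ℚ)+2) with h2 | h2
    · -- i < t ≤ i+2
      have hA : gfun i t = (t+i)/2 := gfun_mid h1 h2
      have hB : gfun (j+1) t = t := gfun_lo (by rw [hj1]; linarith)
      simp only [hA, hB, gfun_lo (show (t+(i:ℚ))/2 ≤ (j:ℚ) by linarith),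
        afun_mid h1 h2, afun_lo (show (t+(i:ℚ))/2 ≤ (j:ℚ) by linarith),
        afun_lo (show t ≤ ((j+1:ℕ):ℚ) by rw [hj1]; linarith)]
      constructor <;> first | trivial | omega | ring
    · rcases le_or_gt t ((j:ℚ)+1) with h3 | h3
      · -- i+2 < t ≤ j+1
        have hA : gfun i t = t - 1 := gfun_hi h2
        have hB : gfun (j+1) t = t := gfun_lo (by rw [hj1]; linarith)
        simp only [hA, hB, gfun_lo (show t - 1 ≤ (j:ℚ) by linarith),
          afun_hi h2, afun_lo (show t - 1 ≤ (j:ℚ) by linarith),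
          afun_lo (show t ≤ ((j+1:ℕ):ℚ) by rw [hj1]; linarith)]
        constructor <;> first | trivial | omega | ring
      · rcases le_or_gt t ((j:ℚ)+3) with h4 | h4
        · -- j+1 < t ≤ j+3
          have hA : gfun i t = t - 1 := gfun_hi h2
          have hB : gfun (j+1) t = (t + ((j+1:ℕ):ℚ))/2 :=
            gfun_mid (by rw [hj1]; linarith) (by rw [hj1]; linarith)
          have hBval : (t + ((j+1:ℕ):ℚ))/2 = (t + (j:ℚ) + 1)/2 := by rw [hj1]; ring
          simp only [hA, hB, hBval,
            gfun_mid (show (j:ℚ) < t - 1 by linarith) (show t - 1 ≤ (j:ℚ)+2 by linarith),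
            gfun_hi (show (i:ℚ)+2 < (t + (j:ℚ) + 1)/2 by linarith),
            afun_hi h2,
            afun_mid (show (j:ℚ) < t - 1 by linarith) (show t - 1 ≤ (j:ℚ)+2 by linarith),
            afun_mid (show ((j+1:ℕ):ℚ) < t by rw [hj1]; linarith) (show t ≤ ((j+1:ℕ):ℚ)+2 by rw [hj1]; linarith),
            afun_hi (show (i:ℚ)+2 < (t + (j:ℚ) + 1)/2 by linarith)]
          constructor <;> first | trivial | omega | ring
        · -- t > j+3
          have hA : gfun i t = t - 1 := gfun_hi h2
          have hB : gfun (j+1) t = t - 1 := gfun_hi (by rw [hj1]; linarith)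
          simp only [hA, hB, gfun_hi (show (j:ℚ)+2 < t - 1 by linarith),
            gfun_hi (show (i:ℚ)+2 < t - 1 by linarith),
            afun_hi h2, afun_hi (show (j:ℚ)+2 < t - 1 by linarith),
            afun_hi (show ((j+1:ℕ):ℚ)+2 < t by rw [hj1]; linarith),
            afun_hi (show (i:ℚ)+2 < t - 1 by linarith)]
          constructor <;> first | trivial | omega | ring

lemma psi_mul_comm {i j : ℕ} (hij : i < j) : psi j * psi i = psi i * psi (j + 1) := by
  apply Equiv.ext
  intro p
  simp only [Equiv.Perm.mul_apply, psi_apply, Prod.mk.injEq]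
  obtain ⟨hg, ha⟩ := comm_key hij p.1
  exact ⟨hg, by omega⟩

lemma rels_hold : ∀ r ∈ thompsonRels, FreeGroup.lift (fun i => psi i) r = 1 := by
  rintro r ⟨i, j, hij, rfl⟩
  simp only [map_mul, map_inv, FreeGroup.lift_apply_of]
  have h := psi_mul_comm hij
  have h2 : (psi i)⁻¹ * psi j * psi i * (psi (j+1))⁻¹
      = (psi i)⁻¹ * (psi j * psi i) * (psi (j+1))⁻¹ := by group
  rw [h2, h]
  group

/-- The representation of Thompson's group on `ℚ × ℤ`. -/
noncomputable def rho : ThompsonF →* Equiv.Perm (ℚ × ℤ) := PresentedGroup.toGroup rels_hold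

lemma rho_x (i : ℕ) : rho (x i) = psi i := PresentedGroup.toGroup.of rels_hold

/-! ### The relation in `ThompsonF` and the upper bound -/

lemma x_rel {i j : ℕ} (hij : i < j) : (x i)⁻¹ * x j * x i = x (j + 1) := by
  have hr : ((FreeGroup.of i)⁻¹ * FreeGroup.of j * FreeGroup.of i * (FreeGroup.of (j+1))⁻¹)
      ∈ thompsonRels := ⟨i, j, hij, rfl⟩
  have h1 : ((x i)⁻¹ * x j * x i * (x (j+1))⁻¹ : ThompsonF) = 1 := by
    have : ((x i)⁻¹ * x j * x i * (x (j+1))⁻¹ : ThompsonF)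
        = QuotientGroup.mk ((FreeGroup.of i)⁻¹ * FreeGroup.of j * FreeGroup.of i
            * (FreeGroup.of (j+1))⁻¹) := rfl
    rw [this]
    exact (QuotientGroup.eq_one_iff _).mpr (Subgroup.subset_normalClosure hr)
  have := mul_inv_eq_one.mp h1
  exact this

lemma conj_pow (m : ℕ) (hm : 1 ≤ m) : ∀ k, ((x 0)⁻¹)^k * x m * (x 0)^k = x (m + k) := by
  intro k
  induction k generalizing m with
  | zero => simp
  | succ k ih =>
    have hrel : (x 0)⁻¹ * x m * x 0 = x (m + 1) := x_rel hm
    have : ((x 0)⁻¹)^(k+1) * x m * (x 0)^(k+1)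
        = ((x 0)⁻¹)^k * ((x 0)⁻¹ * x m * x 0) * (x 0)^k := by
      rw [pow_succ, pow_succ']
      group
    rw [this, hrel, ih (m+1) (by omega)]
    congr 1
    omega

/-! ### Lipschitz / event bookkeeping for the lower bound -/

/-- A permutation of `ℚ × ℤ` is `n`-good if it moves first coordinates by at most 1,
and whenever it decreases the second coordinate, the first coordinate was at most `n+2`
before, and is at most `n+1` after. -/
def Good (n : ℕ) (σ : Equiv.Perm (ℚ × ℤ)) : Prop :=
  ∀ p : ℚ × ℤ, |(σ p).1 - p.1| ≤ 1 ∧ ((σ p).2 < p.2 → p.1 ≤ (n:ℚ) + 2 ∧ (σ p).1 ≤ (n:ℚ) + 1)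

lemma good_psi {n i : ℕ} (h : i ≤ n) : Good n (psi i) := by
  intro p
  obtain ⟨t, e⟩ := p
  have hin : (i:ℚ) ≤ n := by exact_mod_cast h
  rw [psi_apply]
  rcases le_or_gt t i with h1 | h1
  · rw [gfun_lo h1, afun_lo h1]
    constructor
    · simp
    · intro hlt; omega
  · rcases le_or_gt t ((i:ℚ)+2) with h2 | h2
    · rw [gfun_mid h1 h2, afun_mid h1 h2]
      constructor
      · rw [abs_le]; constructor <;> simp <;> linarith
      · intro _
        constructor <;> simp <;> linarith
    · rw [gfun_hi h2, afun_hi h2]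
      constructor
      · rw [abs_le]; constructor <;> simp <;> linarith
      · intro hlt; omega

lemma good_psi_inv {n i : ℕ} (h : i ≤ n) : Good n (psi i)⁻¹ := by
  intro p
  obtain ⟨t, e⟩ := p
  rw [psi_inv_apply]
  constructor
  · simp only [ffun]
    split_ifs <;> rw [abs_le] <;> constructor <;> simp <;> linarith
  · intro hlt
    exfalso
    simp only [bfun] at hlt
    split_ifs at hlt <;> omega

lemma fst_lipschitz (n : ℕ) :
    ∀ L : List (Equiv.Perm (ℚ × ℤ)), (∀ σ ∈ L, Good n σ) → ∀ p : ℚ × ℤ,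
      |(L.prod p).1 - p.1| ≤ (L.length : ℚ) := by
  intro L
  induction L with
  | nil => intro _ p; simp
  | cons σ L ih =>
    intro hG p
    have hσ : Good n σ := hG σ (by simp)
    have hL : ∀ τ ∈ L, Good n τ := fun τ hτ => hG τ (by simp [hτ])
    have h1 : (σ :: L).prod p = σ (L.prod p) := by
      simp [List.prod_cons, Equiv.Perm.mul_apply]
    rw [h1]
    have h2 := (hσ (L.prod p)).1
    have h3 := ih hL p
    have h4 := abs_sub_le ((σ (L.prod p)).1) ((L.prod p).1) p.1
    simp only [List.length_cons]
    push_cast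
    linarith

lemma descent_bound (n : ℕ) :
    ∀ L : List (Equiv.Perm (ℚ × ℤ)), (∀ σ ∈ L, Good n σ) → ∀ p : ℚ × ℤ,
      (L.prod p).2 < p.2 →
      (p.1 - ((n:ℚ) + 2)) + ((L.prod p).1 - ((n:ℚ) + 1)) + 1 ≤ (L.length : ℚ) := by
  intro L
  induction L with
  | nil =>
    intro _ p hp
    simp only [List.prod_nil, Equiv.Perm.one_apply] at hp
    omega
  | cons σ L ih =>
    intro hG p hdec
    have hσ : Good n σ := hG σ (by simp)
    have hL : ∀ τ ∈ L, Good n τ := fun τ hτ => hG τ (by simp [hτ])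
    have h1 : (σ :: L).prod p = σ (L.prod p) := by
      simp [List.prod_cons, Equiv.Perm.mul_apply]
    rw [h1] at hdec ⊢
    set q := L.prod p with hq
    simp only [List.length_cons]
    push_cast
    rcases lt_or_ge (σ q).2 q.2 with hev | hev
    · -- event at this step
      obtain ⟨hq1, hq2⟩ := (hσ q).2 hev
      have hlip := fst_lipschitz n L hL p
      rw [← hq] at hlip
      have : p.1 - q.1 ≤ (L.length : ℚ) := by
        rw [abs_le] at hlip; linarith [hlip.2]
      linarith
    · -- no event: the decrease happened inside L
      have hdec' : q.2 < p.2 := lt_of_le_of_lt hev hdec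
      have hih := ih hL p hdec'
      rw [← hq] at hih
      have := (hσ q).1
      rw [abs_le] at this
      linarith [this.1, this.2]

end TAux

theorem length_x2n (n : ℕ) (hn : 1 ≤ n) : ln n (x (2 * n)) = 2 * n + 1 := by
  classical
  set S := {m | ∃ l : List ThompsonF, l.length = m ∧ (∀ a ∈ l, a ∈ Xset n ∨ a⁻¹ ∈ Xset n) ∧
      l.prod = x (2 * n)} with hS
  have hln : ln n (x (2 * n)) = sInf S := rfl
  -- upper bound: the word x₀⁻ⁿ xₙ x₀ⁿ
  have hmem : (2 * n + 1) ∈ S := by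
    refine ⟨List.replicate n ((x 0)⁻¹) ++ x n :: List.replicate n (x 0), ?_, ?_, ?_⟩
    · simp [List.length_append, List.length_replicate]; omega
    · intro a ha
      simp only [List.mem_append, List.mem_cons, List.mem_replicate] at ha
      rcases ha with ⟨-, rfl⟩ | rfl | ⟨-, rfl⟩
      · right; rw [inv_inv]; exact ⟨0, Nat.zero_le n, rfl⟩
      · left; exact ⟨n, le_refl n, rfl⟩
      · left; exact ⟨0, Nat.zero_le n, rfl⟩
    · rw [List.prod_append, List.prod_cons, List.prod_replicate, List.prod_replicate,
        ← mul_assoc, TAux.conj_pow n hn n]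
      congr 1
      omega
  -- lower bound via the action on ℚ × ℤ
  have hlow : ∀ m ∈ S, 2 * n + 1 ≤ m := by
    rintro m ⟨l, hlen, hgen, hprod⟩
    set L : List (Equiv.Perm (ℚ × ℤ)) := l.map TAux.rho with hLdef
    have hGood : ∀ σ ∈ L, TAux.Good n σ := by
      intro σ hσ
      rw [hLdef, List.mem_map] at hσ
      obtain ⟨a, ha, rfl⟩ := hσ
      rcases hgen a ha with ⟨i, hi, rfl⟩ | ⟨i, hi, hinv⟩
      · rw [TAux.rho_x]
        exact TAux.good_psi hi
      · have : TAux.rho a = (TAux.psi i)⁻¹ := by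
          have h1 : (TAux.rho a)⁻¹ = TAux.psi i := by
            rw [← map_inv, hinv, TAux.rho_x]
          rw [← h1, inv_inv]
        rw [this]
        exact TAux.good_psi_inv hi
    have hLprod : L.prod = TAux.psi (2 * n) := by
      rw [hLdef, ← map_list_prod, hprod, TAux.rho_x]
    -- evaluate at the point (2n+2, 0)
    have hcast : ((2 * n : ℕ) : ℚ) = 2 * (n:ℚ) := by push_cast; ring
    have h1 : ((2*n : ℕ) : ℚ) < ((2 * (n:ℚ) + 2, (0:ℤ)) : ℚ × ℤ).1 := by
      rw [hcast]; norm_num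
    have h2 : ((2 * (n:ℚ) + 2, (0:ℤ)) : ℚ × ℤ).1 ≤ ((2*n : ℕ) : ℚ) + 2 := by
      rw [hcast]
    have hval : TAux.psi (2 * n) ((2 * (n:ℚ) + 2, (0:ℤ)) : ℚ × ℤ)
        = ((2 * (n:ℚ) + 1), (-1 : ℤ)) := by
      rw [TAux.psi_apply, TAux.gfun_mid h1 h2, TAux.afun_mid h1 h2]
      rw [Prod.mk.injEq]
      constructor
      · simp only [hcast]; ring
      · norm_num
    have hdec : (L.prod ((2 * (n:ℚ) + 2, (0:ℤ)) : ℚ × ℤ)).2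
        < (((2 * (n:ℚ) + 2, (0:ℤ))) : ℚ × ℤ).2 := by
      rw [hLprod, hval]
      norm_num
    have hbound := TAux.descent_bound n L hGood ((2 * (n:ℚ) + 2, (0:ℤ)) : ℚ × ℤ) hdec
    rw [hLprod, hval] at hbound
    have hlenL : (L.length : ℚ) = (m : ℚ) := by
      rw [hLdef, List.length_map, hlen]
    rw [hlenL] at hbound
    simp only at hbound
    have : (2 * n + 1 : ℚ) ≤ (m : ℚ) := by push_cast; linarith
    exact_mod_cast this
  rw [hln]
  exact le_antisymm (Nat.sInf_le hmem) (le_csInf ⟨_, hmem⟩ hlow)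
end

section
/- For every n ≥ 1, the element α = x_{2n−1}⁻¹ x_{2n−2}⁻¹ ⋯ x_2⁻¹ x_1⁻¹ of Thompson's group F has word length exactly 4n − 3 with respect to the generating set X_n = {x_0, x_1, …, x_n}, i.e., l_n(α) = 4n − 3. -/
namespace ThompsonAux

noncomputable def ff (i : ℕ) : ℝ → ℝ := fun t =>
  if t ≤ i then t else if t ≤ i + 1 then 2 * t - i else t + 1

noncomputable def gg (i : ℕ) : ℝ → ℝ := fun t =>
  if t ≤ i then t else if t ≤ i + 2 then (t + i) / 2 else t - 1

lemma ff_eq1 {i : ℕ} {t : ℝ} (h : t ≤ i) : ff i t = t := by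
  unfold ff; split_ifs <;> linarith
lemma ff_eq2 {i : ℕ} {t : ℝ} (h1 : (i:ℝ) ≤ t) (h2 : t ≤ i + 1) : ff i t = 2 * t - i := by
  unfold ff; split_ifs <;> linarith
lemma ff_eq3 {i : ℕ} {t : ℝ} (h : (i:ℝ) + 1 ≤ t) : ff i t = t + 1 := by
  unfold ff; split_ifs <;> linarith
lemma gg_eq1 {i : ℕ} {t : ℝ} (h : t ≤ i) : gg i t = t := by
  unfold gg; split_ifs <;> linarith
lemma gg_eq2 {i : ℕ} {t : ℝ} (h1 : (i:ℝ) ≤ t) (h2 : t ≤ i + 2) : gg i t = (t + i) / 2 := by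
  unfold gg; split_ifs <;> linarith
lemma gg_eq3 {i : ℕ} {t : ℝ} (h : (i:ℝ) + 2 ≤ t) : gg i t = t - 1 := by
  unfold gg; split_ifs <;> linarith

lemma gg_ff (i : ℕ) : Function.LeftInverse (gg i) (ff i) := by
  intro t
  unfold ff gg
  split_ifs <;> linarith

lemma ff_gg (i : ℕ) : Function.RightInverse (gg i) (ff i) := by
  intro t
  unfold ff gg
  split_ifs <;> linarith

noncomputable def F (i : ℕ) : Equiv.Perm ℝ := ⟨ff i, gg i, gg_ff i, ff_gg i⟩

@[simp] lemma F_apply (i : ℕ) (t : ℝ) : F i t = ff i t := rfl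
@[simp] lemma F_inv_apply (i : ℕ) (t : ℝ) : (F i)⁻¹ t = gg i t := rfl

lemma F_rel {i j : ℕ} (h : i < j) : F i * F j * (F i)⁻¹ = F (j + 1) := by
  have hij : (i : ℝ) + 1 ≤ j := by exact_mod_cast h
  have hj1 : ((j + 1 : ℕ) : ℝ) = (j : ℝ) + 1 := by push_cast; ring
  ext t
  show ff i (ff j (gg i t)) = ff (j+1) t
  rcases le_total t i with h1 | h1
  · rw [gg_eq1 h1, ff_eq1 (i := j) (by linarith), ff_eq1 (i := i) h1,
      ff_eq1 (i := j+1) (by rw [hj1]; linarith)]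
  · rcases le_total t ((i : ℝ) + 2) with h2 | h2
    · rw [gg_eq2 h1 h2, ff_eq1 (i := j) (by linarith),
        ff_eq2 (i := i) (by linarith) (by linarith),
        ff_eq1 (i := j+1) (by rw [hj1]; linarith)]
      ring
    · rcases le_total t ((j : ℝ) + 1) with h3 | h3
      · rw [gg_eq3 (by linarith), ff_eq1 (i := j) (by linarith),
          ff_eq3 (i := i) (by linarith), ff_eq1 (i := j+1) (by rw [hj1]; linarith)]
        ring
      · rcases le_total t ((j : ℝ) + 2) with h4 | h4
        · rw [gg_eq3 (by linarith), ff_eq2 (i := j) (by linarith) (by linarith),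
            ff_eq3 (i := i) (by linarith),
            ff_eq2 (i := j+1) (by rw [hj1]; linarith) (by rw [hj1]; linarith), hj1]
          ring
        · rw [gg_eq3 (by linarith), ff_eq3 (i := j) (by linarith),
            ff_eq3 (i := i) (by linarith), ff_eq3 (i := j+1) (by rw [hj1]; linarith)]
          ring


/-! ### Pointwise inequalities for `ff` and `gg` -/

lemma ff_self_le (i : ℕ) (t : ℝ) : t ≤ ff i t := by
  unfold ff; split_ifs <;> linarith

lemma ff_le_add_one (i : ℕ) (t : ℝ) : ff i t ≤ t + 1 := by
  unfold ff; split_ifs <;> linarith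

lemma gg_le_self (i : ℕ) (t : ℝ) : gg i t ≤ t := by
  unfold gg; split_ifs <;> linarith

lemma ff_strictMono (i : ℕ) : StrictMono (ff i) := by
  intro a b hab
  unfold ff; split_ifs <;> linarith

lemma gg_strictMono (i : ℕ) : StrictMono (gg i) := by
  intro a b hab
  unfold gg; split_ifs <;> linarith

lemma ff_lip2 (i : ℕ) {a b : ℝ} (hab : a ≤ b) : ff i b - ff i a ≤ 2 * (b - a) := by
  unfold ff; split_ifs <;> linarith

lemma gg_lip (i : ℕ) {a b : ℝ} (hab : a ≤ b) : gg i b - gg i a ≤ b - a := by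
  unfold gg; split_ifs <;> linarith

/-! ### The two homomorphisms -/

noncomputable def rho : ThompsonF →* Equiv.Perm ℝ :=
  PresentedGroup.toGroup (f := fun i => (F i)⁻¹) (by
    rintro r ⟨i, j, hij, rfl⟩
    simp only [map_mul, map_inv, FreeGroup.lift_apply_of, inv_inv]
    rw [← F_rel hij]
    group)

@[simp] lemma rho_x (i : ℕ) : rho (x i) = (F i)⁻¹ :=
  PresentedGroup.toGroup.of _

noncomputable def tauM : ThompsonF →* Multiplicative ℤ :=
  PresentedGroup.toGroup (f := fun _ => Multiplicative.ofAdd 1) (by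
    rintro r ⟨i, j, hij, rfl⟩
    simp only [map_mul, map_inv, FreeGroup.lift_apply_of]
    decide)

noncomputable def tau' (g : ThompsonF) : ℤ := Multiplicative.toAdd (tauM g)

lemma tau'_mul (a b : ThompsonF) : tau' (a * b) = tau' a + tau' b := by
  unfold tau'; rw [map_mul]; rfl

@[simp] lemma tau'_x (i : ℕ) : tau' (x i) = 1 := by
  unfold tau'
  rw [show tauM (x i) = Multiplicative.ofAdd 1 from PresentedGroup.toGroup.of _]
  rfl

@[simp] lemma tau'_one : tau' 1 = 0 := by
  unfold tau'; rw [map_one]; rfl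

@[simp] lemma tau'_inv (a : ThompsonF) : tau' a⁻¹ = - tau' a := by
  unfold tau'; rw [map_inv]; rfl

/-! ### Relations in `ThompsonF` -/

lemma x_rel {i j : ℕ} (h : i < j) : (x i)⁻¹ * x j * x i = x (j + 1) := by
  have key : ((x i)⁻¹ * x j * x i) * (x (j+1))⁻¹ = 1 := by
    show ((PresentedGroup.mk thompsonRels (FreeGroup.of i))⁻¹ *
        PresentedGroup.mk thompsonRels (FreeGroup.of j) *
        PresentedGroup.mk thompsonRels (FreeGroup.of i)) *
        (PresentedGroup.mk thompsonRels (FreeGroup.of (j+1)))⁻¹ = 1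
    rw [← map_inv, ← map_mul, ← map_mul, ← map_inv, ← map_mul]
    have hmem : (FreeGroup.of i)⁻¹ * FreeGroup.of j * FreeGroup.of i *
        (FreeGroup.of (j + 1))⁻¹ ∈ Subgroup.normalClosure thompsonRels :=
      Subgroup.subset_normalClosure ⟨i, j, h, rfl⟩
    exact (QuotientGroup.eq_one_iff _).mpr hmem
  calc (x i)⁻¹ * x j * x i = ((x i)⁻¹ * x j * x i * (x (j+1))⁻¹) * x (j+1) := by group
  _ = x (j + 1) := by rw [key]; group

/-! ### The element `α` and its evaluation -/

noncomputable def alphaList (k : ℕ) : List ThompsonF :=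
  (List.range k).map (fun i => (x (k - i))⁻¹)

@[simp] lemma alphaList_length (k : ℕ) : (alphaList k).length = k := by
  simp [alphaList]

lemma alphaList_prod_succ (k : ℕ) :
    (alphaList (k+1)).prod = (x (k+1))⁻¹ * (alphaList k).prod := by
  unfold alphaList
  rw [List.range_succ_eq_map]
  simp [List.map_map, Function.comp_def, Nat.succ_sub_succ]

lemma tau'_alphaList (k : ℕ) : tau' (alphaList k).prod = -(k : ℤ) := by
  induction k with
  | zero => simp [alphaList]
  | succ k ih =>
    rw [alphaList_prod_succ, tau'_mul, tau'_inv, tau'_x, ih]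
    push_cast; ring

lemma rho_alphaList_apply (k : ℕ) (t : ℝ) (h1 : 2^k * (2 - t) ≤ 1) (h2 : t ≤ 2) :
    rho (alphaList k).prod t = (k : ℝ) + 2 + 2^k * (t - 2) := by
  induction k with
  | zero => simp [alphaList]
  | succ k ih =>
    have hp : (0:ℝ) < 2^k := by positivity
    have hpow : (2:ℝ)^(k+1) = 2 * 2^k := by rw [pow_succ]; ring
    have hX0 : 0 ≤ (2:ℝ)^k * (2 - t) := mul_nonneg hp.le (by linarith)
    have h1'' : 2 * ((2:ℝ)^k * (2 - t)) ≤ 1 := by rw [hpow] at h1; linarith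
    have hv := ih (by linarith)
    rw [alphaList_prod_succ, map_mul, map_inv, rho_x, inv_inv, Equiv.Perm.mul_apply, hv,
      F_apply, ff_eq2 (i := k+1) (by push_cast; nlinarith) (by push_cast; nlinarith)]
    push_cast
    ring

/-! ### The short word for `α` -/

lemma x_pow (n : ℕ) (hn : 1 ≤ n) (k : ℕ) :
    x (n + k) = (x (n-1))^(-(k:ℤ)) * x n * (x (n-1))^(k:ℤ) := by
  induction k with
  | zero => simp
  | succ k ih =>
    have h1 : n - 1 < n + k := by omega
    have : x (n + (k+1)) = (x (n-1))⁻¹ * x (n + k) * x (n-1) := by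
      rw [show n + (k+1) = (n+k) + 1 by ring, ← x_rel h1]
    rw [this, ih]
    push_cast
    group

lemma aux_grp {G : Type*} [Group G] (a b T : G) (k : ℕ) :
    (a ^ (-((k+1:ℕ):ℤ)) * b * a ^ ((k+1:ℕ):ℤ))⁻¹ *
      (a ^ (-(k:ℤ)) * ((b⁻¹ * a) ^ k * (b⁻¹ * T))) =
    a ^ (-((k+1:ℕ):ℤ)) * ((b⁻¹ * a) ^ (k+1) * (b⁻¹ * T)) := by
  have hsum : ((k+1:ℕ):ℤ) + -(k:ℤ) = 1 := by push_cast; ring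
  have h1 : a ^ ((k+1:ℕ):ℤ) * a ^ (-(k:ℤ)) = a := by
    rw [← zpow_add, hsum, zpow_one]
  have inv1 : (a ^ (-((k+1:ℕ):ℤ)) * b * a ^ ((k+1:ℕ):ℤ))⁻¹ =
      a ^ (-((k+1:ℕ):ℤ)) * b⁻¹ * a ^ ((k+1:ℕ):ℤ) := by
    rw [mul_inv_rev, mul_inv_rev, ← zpow_neg, ← zpow_neg, neg_neg, mul_assoc]
  rw [inv1, pow_succ']
  calc a ^ (-((k+1:ℕ):ℤ)) * b⁻¹ * a ^ ((k+1:ℕ):ℤ) *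
      (a ^ (-(k:ℤ)) * ((b⁻¹ * a) ^ k * (b⁻¹ * T)))
      = a ^ (-((k+1:ℕ):ℤ)) * (b⁻¹ * ((a ^ ((k+1:ℕ):ℤ) * a ^ (-(k:ℤ))) *
          ((b⁻¹ * a) ^ k * (b⁻¹ * T)))) := by
        simp only [mul_assoc]
    _ = a ^ (-((k+1:ℕ):ℤ)) * (b⁻¹ * (a * ((b⁻¹ * a) ^ k * (b⁻¹ * T)))) := by rw [h1]
    _ = a ^ (-((k+1:ℕ):ℤ)) * ((b⁻¹ * a) * (b⁻¹ * a) ^ k * (b⁻¹ * T)) := by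
        simp only [mul_assoc]

lemma prodA (n : ℕ) (hn : 1 ≤ n) (k : ℕ) :
    (alphaList (n + k)).prod =
      (x (n-1))^(-(k:ℤ)) * (((x n)⁻¹ * x (n-1))^k * ((x n)⁻¹ * (alphaList (n-1)).prod)) := by
  induction k with
  | zero =>
    have h0 : (alphaList n).prod = (x n)⁻¹ * (alphaList (n-1)).prod := by
      conv_lhs => rw [show n = (n-1)+1 by omega, alphaList_prod_succ, show n-1+1 = n by omega]
    simpa using h0
  | succ k ih =>
    have step : (alphaList (n + (k+1))).prod = (x (n + (k+1)))⁻¹ * (alphaList (n+k)).prod := by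
      rw [show n + (k+1) = (n+k) + 1 by ring, alphaList_prod_succ]
    rw [step, ih, x_pow n hn (k+1)]
    exact aux_grp (x (n-1)) (x n) ((alphaList (n-1)).prod) k

/-! ### The short word of length `4n-3` -/

noncomputable def UW (n : ℕ) : List ThompsonF :=
  List.replicate (n-1) (x (n-1))⁻¹ ++
    ((List.replicate (n-1) [(x n)⁻¹, x (n-1)]).flatten ++ ([(x n)⁻¹] ++ alphaList (n-1)))

lemma UW_length (n : ℕ) (hn : 1 ≤ n) : (UW n).length = 4*n - 3 := by
  simp [UW, List.length_flatten, List.map_replicate, List.sum_replicate, smul_eq_mul]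
  omega

lemma UW_prod (n : ℕ) (hn : 1 ≤ n) : (UW n).prod = (alphaList (2*n-1)).prod := by
  have h2 : 2*n-1 = n + (n-1) := by omega
  rw [h2, prodA n hn (n-1)]
  simp only [UW, List.prod_append, List.prod_flatten, List.map_replicate, List.prod_replicate,
    List.prod_cons, List.prod_nil, mul_one]
  rw [zpow_neg, zpow_natCast, ← inv_pow]

lemma UW_mem (n : ℕ) (hn : 1 ≤ n) :
    ∀ a ∈ UW n, (∃ i ≤ n, a = x i) ∨ (∃ i ≤ n, a⁻¹ = x i) := by
  intro a ha
  unfold UW at ha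
  rw [List.mem_append] at ha
  rcases ha with ha | ha
  · rw [List.mem_replicate] at ha
    exact Or.inr ⟨n-1, by omega, by rw [ha.2, inv_inv]⟩
  · rw [List.mem_append] at ha
    rcases ha with ha | ha
    · rw [List.mem_flatten] at ha
      obtain ⟨l, hl, hal⟩ := ha
      rw [List.mem_replicate] at hl
      rw [hl.2] at hal
      rcases hal with _ | ⟨_, hal⟩
      · exact Or.inr ⟨n, le_refl n, by rw [inv_inv]⟩
      · rcases hal with _ | ⟨_, hal⟩
        · exact Or.inl ⟨n-1, by omega, rfl⟩
        · cases hal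
    · rw [List.mem_append] at ha
      rcases ha with ha | ha
      · rw [List.mem_singleton] at ha
        exact Or.inr ⟨n, le_refl n, by rw [ha, inv_inv]⟩
      · unfold alphaList at ha
        rw [List.mem_map] at ha
        obtain ⟨i, hi, hai⟩ := ha
        exact Or.inr ⟨n-1-i, by omega, by rw [← hai, inv_inv]⟩

/-! ### The counting invariant -/

lemma INV (n M : ℕ) (η : ℝ) (hη : 0 < η) (hsm : 2^M * η ≤ 1/4) :
    ∀ L : List ThompsonF, L.length ≤ M →
    (∀ a ∈ L, (∃ i ≤ n, a = x i) ∨ (∃ i ≤ n, a⁻¹ = x i)) →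
    ∃ E R : ℕ,
      E + R ≤ L.countP (fun a => decide (tau' a = -1)) ∧
      rho L.prod (2-η) < rho L.prod 2 ∧
      rho L.prod 2 - rho L.prod (2-η) ≤ 2^E * η ∧
      rho L.prod 2 ≤ (n:ℝ) + 2 + 1/4 + R := by
  intro L
  induction L with
  | nil =>
    intro _ _
    have hcn : (0:ℝ) ≤ (n:ℝ) := Nat.cast_nonneg n
    refine ⟨0, 0, by simp, ?_, ?_, ?_⟩
    · simp only [List.prod_nil, map_one, Equiv.Perm.coe_one, id_eq]
      linarith
    · simp only [List.prod_nil, map_one, Equiv.Perm.coe_one, id_eq, pow_zero, one_mul]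
      linarith
    · simp only [List.prod_nil, map_one, Equiv.Perm.coe_one, id_eq, Nat.cast_zero]
      linarith
  | cons a L ih =>
    intro hlen hmem
    obtain ⟨E, R, hER, hlt, hgap, hu⟩ :=
      ih (le_trans (Nat.le_succ _) hlen) (fun b hb => hmem b (List.mem_cons_of_mem a hb))
    have hEM : E ≤ M :=
      le_trans (le_trans (Nat.le_add_right E R) (le_trans hER (L.countP_le_length)))
        (le_trans (Nat.le_succ _) hlen)
    have h2EM : (2:ℝ)^E * η ≤ 1/4 := by
      refine le_trans ?_ hsm
      exact mul_le_mul_of_nonneg_right (pow_le_pow_right₀ (by norm_num) hEM) hη.le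
    have happ : ∀ t : ℝ, rho ((a :: L).prod) t = rho a (rho L.prod t) := fun t => by
      rw [List.prod_cons, map_mul, Equiv.Perm.mul_apply]
    rcases hmem a (List.mem_cons_self) with ⟨i, hi, hax⟩ | ⟨i, hi, hinv⟩
    · -- `a = x i` : a contracting letter
      have hval : ∀ t : ℝ, rho ((a :: L).prod) t = gg i (rho L.prod t) := fun t => by
        rw [happ, hax, rho_x, F_inv_apply]
      have hcount : (a :: L).countP (fun b => decide (tau' b = -1)) =
          L.countP (fun b => decide (tau' b = -1)) := by
        rw [List.countP_cons]
        simp [hax, tau'_x]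
      refine ⟨E, R, by rw [hcount]; exact hER, ?_, ?_, ?_⟩
      · rw [hval, hval]; exact gg_strictMono i hlt
      · rw [hval, hval]; exact le_trans (gg_lip i hlt.le) hgap
      · rw [hval]; exact le_trans (gg_le_self i _) hu
    · -- `a = (x i)⁻¹` : an expanding letter
      have hax : a = (x i)⁻¹ := by rw [← hinv, inv_inv]
      have hval : ∀ t : ℝ, rho ((a :: L).prod) t = ff i (rho L.prod t) := fun t => by
        rw [happ, hax, map_inv, rho_x, inv_inv, F_apply]
      have hcount : (a :: L).countP (fun b => decide (tau' b = -1)) =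
          L.countP (fun b => decide (tau' b = -1)) + 1 := by
        rw [List.countP_cons]
        simp [hax, tau'_inv, tau'_x]
      have hcast : (i:ℝ) ≤ n := by exact_mod_cast hi
      set u := rho L.prod 2 with hu_def
      set lo := rho L.prod (2-η) with hlo_def
      by_cases hexp : u - lo < ff i u - ff i lo
      · -- expansion step
        have hlow : lo < (i:ℝ) + 1 := by
          by_contra hcon
          push_neg at hcon
          rw [ff_eq3 (le_trans hcon hlt.le), ff_eq3 hcon] at hexp
          linarith
        refine ⟨E + 1, 0, ?_, ?_, ?_, ?_⟩
        · rw [hcount]; omega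
        · rw [hval, hval]; exact ff_strictMono i hlt
        · rw [hval, hval]
          have := ff_lip2 i hlt.le
          have hps : (2:ℝ)^(E+1) = 2 * 2^E := by rw [pow_succ]; ring
          rw [hps]
          nlinarith [hgap, hη.le]
        · rw [hval]
          have h1 := ff_le_add_one i u
          push_cast
          have : u - lo ≤ 2^E * η := hgap
          linarith
      · -- no expansion
        push_neg at hexp
        refine ⟨E, R + 1, ?_, ?_, ?_, ?_⟩
        · rw [hcount]; omega
        · rw [hval, hval]; exact ff_strictMono i hlt
        · rw [hval, hval]; linarith
        · rw [hval]
          have h1 := ff_le_add_one i u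
          push_cast
          linarith

lemma tau'_count (n : ℕ) :
    ∀ l : List ThompsonF, (∀ a ∈ l, (∃ i ≤ n, a = x i) ∨ (∃ i ≤ n, a⁻¹ = x i)) →
    tau' l.prod = (l.length : ℤ) - 2 * (l.countP (fun a => decide (tau' a = -1))) := by
  intro l
  induction l with
  | nil => intro _; simp
  | cons a L ihl =>
    intro hmem
    have ih' := ihl (fun b hb => hmem b (List.mem_cons_of_mem a hb))
    rw [List.prod_cons, tau'_mul, List.countP_cons, List.length_cons, ih']
    rcases hmem a (List.mem_cons_self) with ⟨i, hi, hax⟩ | ⟨i, hi, hinv⟩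
    · rw [hax]
      simp only [tau'_x]
      norm_num
      push_cast
      ring
    · have hax : a = (x i)⁻¹ := by rw [← hinv, inv_inv]
      rw [hax]
      simp only [tau'_inv, tau'_x]
      norm_num
      push_cast
      ring

/-! ### The lower bound -/

lemma lower_bound (n : ℕ) (hn : 1 ≤ n) (l : List ThompsonF)
    (hmem : ∀ a ∈ l, (∃ i ≤ n, a = x i) ∨ (∃ i ≤ n, a⁻¹ = x i))
    (hprod : l.prod = (alphaList (2*n-1)).prod) :
    4*n - 3 ≤ l.length := by
  set m := l.length with hm
  set η : ℝ := ((2:ℝ)^(2*n + m))⁻¹ with hη_def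
  have hη : 0 < η := by positivity
  have hsm : (2:ℝ)^m * η ≤ 1/4 := by
    rw [hη_def, pow_add]
    rw [mul_inv]
    have h4 : (4:ℝ) ≤ 2^(2*n) := by
      calc (4:ℝ) = 2^2 := by norm_num
      _ ≤ 2^(2*n) := pow_le_pow_right₀ (by norm_num) (by omega)
    have hp : (0:ℝ) < 2^(2*n) := by positivity
    have hm' : (0:ℝ) < 2^m := by positivity
    rw [show (2:ℝ)^m * ((2^(2*n))⁻¹ * (2^m)⁻¹) = (2^(2*n))⁻¹ * (2^m * (2^m)⁻¹) by ring,
      mul_inv_cancel₀ (ne_of_gt hm'), mul_one]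
    rw [inv_le_comm₀ hp (by norm_num)]
    linarith
  obtain ⟨E, R, hER, hlt, hgap, hub⟩ := INV n m η hη hsm l (le_refl _) hmem
  -- evaluate the two endpoints
  have hk : ((2*n-1 : ℕ) : ℝ) = 2*(n:ℝ) - 1 := by
    have : (1:ℕ) ≤ 2*n := by omega
    push_cast [Nat.cast_sub this]
    ring
  have hcap : (2:ℝ)^(2*n-1 : ℕ) * η ≤ 1 := by
    rw [hη_def]
    rw [show 2*n + m = (2*n-1) + (m+1) by omega, pow_add, mul_inv]
    have hp1 : (0:ℝ) < 2^(2*n-1:ℕ) := by positivity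
    have hp2 : (0:ℝ) < 2^(m+1) := by positivity
    calc (2:ℝ)^(2*n-1:ℕ) * ((2^(2*n-1:ℕ))⁻¹ * (2^(m+1))⁻¹)
        = (2^(2*n-1:ℕ) * (2^(2*n-1:ℕ))⁻¹) * (2^(m+1))⁻¹ := by ring
      _ = (2^(m+1))⁻¹ := by rw [mul_inv_cancel₀ (ne_of_gt hp1), one_mul]
      _ ≤ 1 := by rw [inv_le_one_iff₀]; right; exact one_le_pow₀ (by norm_num)
  have hev2 : rho l.prod 2 = ((2*n-1:ℕ):ℝ) + 2 := by
    rw [hprod, rho_alphaList_apply (2*n-1) 2 (by norm_num) (le_refl _)]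
    ring
  have hev1 : rho l.prod (2 - η) = ((2*n-1:ℕ):ℝ) + 2 - 2^(2*n-1:ℕ) * η := by
    rw [hprod, rho_alphaList_apply (2*n-1) (2-η) (by linarith) (by linarith)]
    ring
  -- E is large
  have hE : 2*n - 1 ≤ E := by
    have h1 : (2:ℝ)^(2*n-1:ℕ) * η ≤ 2^E * η := by
      rw [hev2, hev1] at hgap
      linarith
    have h2 : (2:ℝ)^(2*n-1:ℕ) ≤ 2^E := le_of_mul_le_mul_right h1 hη
    exact (pow_le_pow_iff_right₀ (by norm_num)).mp h2
  -- R is large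
  have hR : n - 1 ≤ R := by
    by_contra hcon
    push_neg at hcon
    have h1 : R + 2 ≤ n := by omega
    have h2 : (R:ℝ) + 2 ≤ (n:ℝ) := by exact_mod_cast h1
    rw [hev2, hk] at hub
    linarith
  -- put the counts together
  have hN : 3*n - 2 ≤ l.countP (fun a => decide (tau' a = -1)) := by omega
  have htau := tau'_count n l hmem
  have htauval : tau' l.prod = -((2*n-1:ℕ):ℤ) := by rw [hprod, tau'_alphaList]
  rw [htauval] at htau
  omega

end ThompsonAux

theorem length_alpha (n : ℕ) (hn : 1 ≤ n) :
    ln n (((List.range (2 * n - 1)).map (fun i => (x (2 * n - 1 - i))⁻¹)).prod) = 4 * n - 3 := by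
  have halpha : ((List.range (2 * n - 1)).map (fun i => (x (2 * n - 1 - i))⁻¹)).prod =
      (ThompsonAux.alphaList (2*n-1)).prod := rfl
  rw [halpha]
  have hmemset : ∀ (a : ThompsonF), (a ∈ Xset n ∨ a⁻¹ ∈ Xset n) ↔
      ((∃ i ≤ n, a = x i) ∨ (∃ i ≤ n, a⁻¹ = x i)) := fun a => Iff.rfl
  have hub_mem : (4*n - 3) ∈ {m | ∃ l : List ThompsonF, l.length = m ∧
      (∀ a ∈ l, a ∈ Xset n ∨ a⁻¹ ∈ Xset n) ∧ l.prod = (ThompsonAux.alphaList (2*n-1)).prod} := by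
    refine ⟨ThompsonAux.UW n, ThompsonAux.UW_length n hn, ?_, ThompsonAux.UW_prod n hn⟩
    intro a ha
    exact (hmemset a).mpr (ThompsonAux.UW_mem n hn a ha)
  apply le_antisymm
  · exact Nat.sInf_le hub_mem
  · apply le_csInf ⟨_, hub_mem⟩
    rintro b ⟨l, hlen, hmem, hprod⟩
    rw [← hlen]
    exact ThompsonAux.lower_bound n hn l
      (fun a ha => (hmemset a).mp (hmem a ha)) hprod
end
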